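/- arXiv:1511.03241 — 4 statements merged into one kernel-verified Lean document; each statement's English description precedes it below -/
import Mathlib

section
/- The set of optimal solutions of (LP) equals the intersection of the set of optimal solutions of (LP') with X; that is, X* = X** ∩ X. -/
open Finset

/-- The feasible set `X` of the linear program (LP). -/
def XsetDef {I : Type*} [Fintype I] [DecidableEq I]
    (Kbar : Finset (I → ℕ)) (ρ : I → ℝ) : Set ((I → ℕ) → ℝ) :=
  {x | (∀ k ∈ Kbar.erase 0, 0 ≤ x k) ∧ ∀ i : I, ∑ k ∈ Kbar.erase 0, (k i : ℝ) * x k = ρ i}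

/-- The set `X*` of optimal solutions of (LP). -/
def XstarDef {I : Type*} [Fintype I] [DecidableEq I]
    (Kbar : Finset (I → ℕ)) (ρ : I → ℝ) : Set ((I → ℕ) → ℝ) :=
  {x ∈ XsetDef Kbar ρ |
    ∀ y ∈ XsetDef Kbar ρ, ∑ k ∈ Kbar.erase 0, x k ≤ ∑ k ∈ Kbar.erase 0, y k}

/-- The feasible set of the relaxed linear program (LP'). -/
def XsetDef' {I : Type*} [Fintype I] [DecidableEq I]
    (Kbar : Finset (I → ℕ)) (ρ : I → ℝ) : Set ((I → ℕ) → ℝ) :=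
  {x | (∀ k ∈ Kbar.erase 0, 0 ≤ x k) ∧ ∀ i : I, ρ i ≤ ∑ k ∈ Kbar.erase 0, (k i : ℝ) * x k}

/-- The set `X**` of optimal solutions of (LP'). -/
def XstarstarDef {I : Type*} [Fintype I] [DecidableEq I]
    (Kbar : Finset (I → ℕ)) (ρ : I → ℝ) : Set ((I → ℕ) → ℝ) :=
  {x ∈ XsetDef' Kbar ρ |
    ∀ y ∈ XsetDef' Kbar ρ, ∑ k ∈ Kbar.erase 0, x k ≤ ∑ k ∈ Kbar.erase 0, y k}

lemma qsum (α : ℝ) (b : ℕ) :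
    ∑ a ∈ Finset.range (b+1), ((if a = b then α else 0) + (if a = 0 then 1 - α else 0)) = 1 := by
  rw [Finset.sum_add_distrib, Finset.sum_ite_eq', Finset.sum_ite_eq']
  simp

lemma qasum (α : ℝ) (b : ℕ) :
    ∑ a ∈ Finset.range (b+1), (a:ℝ) * ((if a = b then α else 0) + (if a = 0 then 1 - α else 0))
      = α * b := by
  have h : ∀ a ∈ Finset.range (b+1), (a:ℝ) * ((if a = b then α else 0) + (if a = 0 then 1 - α else 0)) = (if a = b then (a:ℝ) * α else 0) + (if a = 0 then (a:ℝ) * (1 - α) else 0) := by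
    intro a _; split_ifs <;> ring
  rw [Finset.sum_congr rfl h, Finset.sum_add_distrib, Finset.sum_ite_eq', Finset.sum_ite_eq']
  simp [mul_comm]

lemma exists_reduce {I : Type*} [Fintype I] [DecidableEq I]
    (Kbar : Finset (I → ℕ))
    (hmono : ∀ k ∈ Kbar, ∀ k' : I → ℕ, (∀ i, k' i ≤ k i) → k' ∈ Kbar)
    (ρ : I → ℝ) (hρ : ∀ i, 0 < ρ i)
    (y : (I → ℕ) → ℝ) (hy : y ∈ XsetDef' Kbar ρ) :
    ∃ z ∈ XsetDef Kbar ρ, ∑ k ∈ Kbar.erase 0, z k ≤ ∑ k ∈ Kbar.erase 0, y k := by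
  obtain ⟨hy0, hys⟩ := hy
  set K := Kbar.erase 0 with hK
  set s : I → ℝ := fun i => ∑ k ∈ K, (k i : ℝ) * y k with hsdef
  have hspos : ∀ i, 0 < s i := fun i => lt_of_lt_of_le (hρ i) (hys i)
  set α : I → ℝ := fun i => ρ i / s i with hα
  have hα0 : ∀ i, 0 < α i := fun i => div_pos (hρ i) (hspos i)
  have hα1 : ∀ i, α i ≤ 1 := fun i => div_le_one_of_le₀ (hys i) (hspos i).le
  set q : I → ℕ → ℕ → ℝ :=
    fun i a b => (if a = b then α i else 0) + (if a = 0 then 1 - α i else 0) with hqdef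
  have hq0 : ∀ i a b, 0 ≤ q i a b := by
    intro i a b
    have h1 := hα0 i
    have h2 := hα1 i
    simp only [hqdef]
    split_ifs <;> linarith
  set w : (I → ℕ) → (I → ℕ) → ℝ := fun k' k => ∏ i, q i (k' i) (k i) with hwdef
  have hw0 : ∀ k' k, 0 ≤ w k' k := fun k' k => Finset.prod_nonneg fun i _ => hq0 _ _ _
  set z : (I → ℕ) → ℝ := fun k' => ∑ k ∈ K, w k' k * y k with hzdef
  have hz0 : ∀ k', 0 ≤ z k' := fun k' =>
    Finset.sum_nonneg fun k hk => mul_nonneg (hw0 _ _) (hy0 k hk)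
  -- master formula
  have master : ∀ k ∈ Kbar, ∀ g : I → ℕ → ℝ,
      ∑ k' ∈ Kbar, (∏ j, g j (k' j)) * w k' k
        = ∏ j, ∑ a ∈ Finset.range (k j + 1), g j a * q j a (k j) := by
    intro k hk g
    set P := Fintype.piFinset (fun j => Finset.range (k j + 1)) with hP
    have hsub : P ⊆ Kbar := by
      intro k' hk'
      refine hmono k hk k' fun i => ?_
      have := (Fintype.mem_piFinset.mp hk') i
      exact Nat.lt_succ_iff.mp (Finset.mem_range.mp this)
    rw [← Finset.sum_subset hsub ?van]
    case van =>
      intro k' _ hk'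
      have : ∃ j, ¬ k' j < k j + 1 := by
        by_contra h
        push_neg at h
        exact hk' (Fintype.mem_piFinset.mpr fun j => Finset.mem_range.mpr (h j))
      obtain ⟨j, hj⟩ := this
      have hqz : q j (k' j) (k j) = 0 := by
        have h1 : k' j ≠ k j := by omega
        have h2 : k' j ≠ 0 := by omega
        simp [hqdef, h1, h2]
      have : w k' k = 0 := Finset.prod_eq_zero (Finset.mem_univ j) hqz
      rw [this, mul_zero]
    rw [Finset.prod_univ_sum]
    exact Finset.sum_congr rfl fun p _ => by rw [hwdef, ← Finset.prod_mul_distrib]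
  -- coordinate constraints
  have hcoord : ∀ i, ∑ k' ∈ K, (k' i : ℝ) * z k' = ρ i := by
    intro i
    have h00 : ((0 : I → ℕ) i : ℝ) * z 0 = 0 := by simp
    rw [hK, Finset.sum_erase (f := fun k' => ((k' i : ℕ) : ℝ) * z k') Kbar h00]
    have hswap : ∑ k' ∈ Kbar, (k' i : ℝ) * z k'
        = ∑ k ∈ K, (∑ k' ∈ Kbar, ((∏ j, (if j = i then ((k' j : ℕ) : ℝ) else 1)) * w k' k)) * y k := by
      simp only [hzdef, Finset.mul_sum, Finset.sum_mul]
      rw [Finset.sum_comm]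
      refine Finset.sum_congr rfl fun k _ => Finset.sum_congr rfl fun k' _ => ?_
      have : (∏ j, (if j = i then ((k' j : ℕ) : ℝ) else 1)) = (k' i : ℝ) := by
        rw [Finset.prod_ite_eq' Finset.univ i (fun j => ((k' j : ℕ) : ℝ))]
        simp
      rw [this]; ring
    rw [hswap]
    have hin : ∀ k ∈ K, (∑ k' ∈ Kbar, ((∏ j, (if j = i then ((k' j : ℕ) : ℝ) else 1)) * w k' k)) = α i * k i := by
      intro k hk
      rw [master k (Finset.mem_of_mem_erase hk) (fun j a => if j = i then (a : ℝ) else 1)]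
      have hfac : ∀ j, (∑ a ∈ Finset.range (k j + 1), (if j = i then (a:ℝ) else 1) * q j a (k j))
          = if j = i then α i * k i else 1 := by
        intro j
        by_cases hj : j = i
        · subst hj; simp only [if_pos rfl]; exact qasum (α j) (k j)
        · simp only [if_neg hj, one_mul]; exact qsum (α j) (k j)
      rw [Finset.prod_congr rfl fun j _ => hfac j,
        Finset.prod_ite_eq' Finset.univ i (fun _ => α i * (k i : ℝ))]
      simp
    rw [Finset.sum_congr rfl (fun k hk => by rw [hin k hk] :
      ∀ k ∈ K, (∑ k' ∈ Kbar, ((∏ j, (if j = i then ((k' j : ℕ) : ℝ) else 1)) * w k' k)) * y k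
        = α i * (k i : ℝ) * y k)]
    have : ∑ k ∈ K, α i * (k i : ℝ) * y k = α i * s i := by
      rw [hsdef, Finset.mul_sum]
      exact Finset.sum_congr rfl fun k _ => by ring
    rw [this]
    exact div_mul_cancel₀ (ρ i) (hspos i).ne'
  -- objective
  have hobj : ∑ k' ∈ K, z k' ≤ ∑ k ∈ K, y k := by
    have hswap : ∑ k' ∈ K, z k' = ∑ k ∈ K, (∑ k' ∈ K, w k' k) * y k := by
      simp only [hzdef, Finset.sum_mul]
      rw [Finset.sum_comm]
    rw [hswap]
    refine Finset.sum_le_sum fun k hk => ?_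
    have hwk1 : ∑ k' ∈ K, w k' k ≤ 1 := by
      have h1 : ∑ k' ∈ K, w k' k ≤ ∑ k' ∈ Kbar, w k' k :=
        Finset.sum_le_sum_of_subset_of_nonneg (Finset.erase_subset _ _)
          (fun k' _ _ => hw0 k' k)
      have h2 : ∑ k' ∈ Kbar, w k' k = 1 := by
        have := master k (Finset.mem_of_mem_erase hk) (fun _ _ => 1)
        simp only [Finset.prod_const_one, one_mul] at this
        rw [this]
        rw [Finset.prod_congr rfl fun j _ => qsum (α j) (k j)]
        simp
      linarith
    calc (∑ k' ∈ K, w k' k) * y k ≤ 1 * y k :=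
          mul_le_mul_of_nonneg_right hwk1 (hy0 k hk)
      _ = y k := one_mul _
  exact ⟨z, ⟨fun k _ => hz0 k, hcoord⟩, hobj⟩

/-- `X* = X** ∩ X`. -/
theorem lp_opt_eq_lp'_opt_inter_X
    {I : Type*} [Fintype I] [DecidableEq I] [Nonempty I]
    (Kbar : Finset (I → ℕ))
    (h0 : (0 : I → ℕ) ∈ Kbar)
    (hunit : ∀ i : I, Pi.single i 1 ∈ Kbar)
    (hmono : ∀ k ∈ Kbar, ∀ k' : I → ℕ, (∀ i, k' i ≤ k i) → k' ∈ Kbar)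
    (ρ : I → ℝ) (hρ : ∀ i, 0 < ρ i) :
    XstarDef Kbar ρ = XstarstarDef Kbar ρ ∩ XsetDef Kbar ρ := by
  ext x
  simp only [XstarDef, XstarstarDef, Set.mem_setOf_eq, Set.mem_inter_iff, Set.mem_sep_iff]
  constructor
  · rintro ⟨hxX, hxopt⟩
    have hxX' : x ∈ XsetDef' Kbar ρ := ⟨hxX.1, fun i => (hxX.2 i).ge⟩
    refine ⟨⟨hxX', fun y hy => ?_⟩, hxX⟩
    obtain ⟨z, hzX, hz⟩ := exists_reduce Kbar hmono ρ hρ y hy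
    exact le_trans (hxopt z hzX) hz
  · rintro ⟨⟨hxX', hxopt'⟩, hxX⟩
    exact ⟨hxX, fun y hy => hxopt' y ⟨hy.1, fun i => (hy.2 i).ge⟩⟩
end

section
/- Let a ∈ (0,1). The function L^(a) attains a unique minimum over X, and a point x ∈ X is this unique minimizer if and only if x has a product-form representation, i.e. there exists a vector ν ∈ ℝ^I such that x_k = (a/c_k)·exp(b·Σ_{i∈I} k_i ν_i) = (1/c_k)·a^{1 − Σ_{i∈I} k_i ν_i} for every k ∈ K. -/
open Finset

/-- `c_k = ∏_i (k_i)!`. -/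
noncomputable def confC {I : Type*} [Fintype I] (k : I → ℕ) : ℝ :=
  ∏ i, (Nat.factorial (k i) : ℝ)

/-- The Lyapunov function `L^(a)(x) = -(1/log a) ∑_{k∈K} x_k log(x_k c_k/(e a))`.
(The convention `0 log 0 = 0` holds automatically, since `Real.log 0 = 0`.) -/
noncomputable def Lfun {I : Type*} [Fintype I] [DecidableEq I]
    (Kbar : Finset (I → ℕ)) (a : ℝ) (x : (I → ℕ) → ℝ) : ℝ :=
  -(1 / Real.log a) *
    ∑ k ∈ Kbar.erase 0, x k * Real.log (x k * confC k / (Real.exp 1 * a))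

section AuxLemmas

set_option linter.unusedSectionVars false
set_option linter.unusedVariables false

lemma confC_pos {I : Type*} [Fintype I] (k : I → ℕ) : 0 < confC k :=
  Finset.prod_pos fun i _ => by exact_mod_cast Nat.factorial_pos (k i)

/-- Supporting-line inequality for `t ↦ t log(tC)` at `s > 0`. -/
lemma key_ineq {s t C : ℝ} (hs : 0 < s) (ht : 0 ≤ t) (hC : 0 < C) :
    (Real.log (s * C) + 1) * (t - s) ≤ t * Real.log (t * C) - s * Real.log (s * C) := by
  rcases ht.eq_or_lt' with rfl | ht'
  · simp only [zero_mul, Real.log_zero, mul_zero, zero_sub, neg_mul]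
    nlinarith [hs]
  · have h := Real.log_le_sub_one_of_pos (div_pos (mul_pos hs hC) (mul_pos ht' hC))
    rw [Real.log_div (mul_pos hs hC).ne' (mul_pos ht' hC).ne'] at h
    have hst : s * C / (t * C) = s / t := by
      rw [mul_div_mul_right _ _ hC.ne']
    rw [hst] at h
    have h2 : t * (Real.log (s*C) - Real.log (t*C)) ≤ t * (s / t - 1) :=
      mul_le_mul_of_nonneg_left h ht'.le
    have h3 : t * (s / t - 1) = s - t := by field_simp
    nlinarith [h2, h3]

lemma key_ineq_strict {s t C : ℝ} (hs : 0 < s) (ht : 0 ≤ t) (hC : 0 < C) (hne : t ≠ s) :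
    (Real.log (s * C) + 1) * (t - s) < t * Real.log (t * C) - s * Real.log (s * C) := by
  rcases ht.eq_or_lt' with rfl | ht'
  · simp only [zero_mul, Real.log_zero, mul_zero, zero_sub, neg_mul]
    nlinarith [hs]
  · have hne1 : s / t ≠ 1 := by
      intro hd
      exact hne ((div_eq_one_iff_eq ht'.ne').mp hd).symm
    have h := Real.log_lt_sub_one_of_pos (div_pos hs ht') hne1
    rw [Real.log_div hs.ne' ht'.ne'] at h
    have hls : Real.log (s * C) = Real.log s + Real.log C := Real.log_mul hs.ne' hC.ne'
    have hlt : Real.log (t * C) = Real.log t + Real.log C := Real.log_mul ht'.ne' hC.ne'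
    have h2 : t * (Real.log s - Real.log t) < t * (s / t - 1) :=
      mul_lt_mul_of_pos_left h ht'
    have h3 : t * (s / t - 1) = s - t := by field_simp
    nlinarith [h2, h3]

lemma mul_log_split {t C : ℝ} (ht : 0 ≤ t) (hC : 0 < C) :
    t * Real.log (t * C) = t * Real.log t + t * Real.log C := by
  rcases ht.eq_or_lt' with rfl | ht'
  · simp
  · rw [Real.log_mul ht'.ne' hC.ne']; ring

section Main
variable {I : Type*} [Fintype I] [DecidableEq I]

set_option linter.unusedSectionVars false
set_option linter.unusedVariables false

/-- generic computation: `∑_{k∈K} k_i · (∑_j [k = e_j] v_j) = v_i` when all `e_j ∈ K`. -/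
lemma unit_sum (K : Finset (I → ℕ)) (hK : ∀ j : I, Pi.single j 1 ∈ K) (v : I → ℝ) (i : I) :
    ∑ k ∈ K, (k i : ℝ) * (∑ j, if k = Pi.single j 1 then v j else 0) = v i := by
  have : ∀ k ∈ K, (k i : ℝ) * (∑ j, if k = Pi.single j 1 then v j else 0)
      = ∑ j, if k = Pi.single j 1 then ((Pi.single j 1 : I → ℕ) i : ℝ) * v j else 0 := by
    intro k _
    rw [Finset.mul_sum]
    refine Finset.sum_congr rfl fun j _ => ?_
    by_cases h : k = Pi.single j 1 <;> simp [h]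
  rw [Finset.sum_congr rfl this, Finset.sum_comm]
  have h2 : ∀ j : I, (∑ k ∈ K, if k = Pi.single j 1 then ((Pi.single j 1 : I → ℕ) i : ℝ) * v j else 0)
      = ((Pi.single j 1 : I → ℕ) i : ℝ) * v j := by
    intro j
    rw [Finset.sum_ite_eq' K (Pi.single j 1) (fun _ => ((Pi.single j 1 : I → ℕ) i : ℝ) * v j)]
    simp [hK j]
  rw [Finset.sum_congr rfl fun j _ => h2 j]
  have : ∀ j : I, ((Pi.single j 1 : I → ℕ) i : ℝ) = if i = j then 1 else 0 := by
    intro j; rw [Pi.single_apply]; split <;> simp_all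
  simp only [this]
  simp [Finset.sum_ite_eq]

lemma single_mem_erase (Kbar : Finset (I → ℕ)) (hunit : ∀ i : I, Pi.single i 1 ∈ Kbar) (j : I) :
    Pi.single j 1 ∈ Kbar.erase 0 := by
  refine Finset.mem_erase.mpr ⟨?_, hunit j⟩
  intro h
  have := congrFun h j
  simp [Pi.single_eq_same] at this

noncomputable def Ffun (Kbar : Finset (I → ℕ)) (a : ℝ) (x : (I → ℕ) → ℝ) : ℝ :=
  ∑ k ∈ Kbar.erase 0, x k * Real.log (x k * confC k / (Real.exp 1 * a))

/-- A strictly positive feasible point. -/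
lemma exists_pos_point [Nonempty I] (Kbar : Finset (I → ℕ))
    (hunit : ∀ i : I, Pi.single i 1 ∈ Kbar) (ρ : I → ℝ) (hρ : ∀ i, 0 < ρ i) :
    ∃ z ∈ XsetDef Kbar ρ, ∀ k ∈ Kbar.erase 0, 0 < z k := by
  classical
  set K := Kbar.erase 0 with hKdef
  have hKunit : ∀ j : I, Pi.single j 1 ∈ K := single_mem_erase Kbar hunit
  set m : I → ℝ := fun i => ∑ k ∈ K, (k i : ℝ) with hm
  have hm1 : ∀ i, 1 ≤ m i := by
    intro i
    have := Finset.single_le_sum (f := fun k : I → ℕ => (k i : ℝ))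
      (fun k _ => by positivity) (hKunit i)
    simpa [hm, Pi.single_eq_same] using this
  have hmpos : ∀ i, 0 < m i := fun i => lt_of_lt_of_le one_pos (hm1 i)
  set ε : ℝ := Finset.univ.inf' Finset.univ_nonempty (fun i => ρ i / (2 * m i)) with hε
  have hεpos : 0 < ε := by
    rw [hε, Finset.lt_inf'_iff]
    intro i _
    exact div_pos (hρ i) (by nlinarith [hmpos i])
  have hεle : ∀ i, ε * m i ≤ ρ i / 2 := by
    intro i
    have h1 : ε ≤ ρ i / (2 * m i) := Finset.inf'_le _ (Finset.mem_univ i)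
    have h2 : ρ i / (2 * m i) * m i = ρ i / 2 := by
      rw [div_mul_eq_mul_div, mul_comm 2 (m i), ← div_div, mul_div_assoc,
        div_self (hmpos i).ne', mul_one]
    nlinarith [mul_le_mul_of_nonneg_right h1 (hmpos i).le, h2]
  set z : (I → ℕ) → ℝ := fun k => ε + ∑ j, if k = Pi.single j 1 then ρ j - ε * m j else 0 with hz
  have hznn : ∀ k, 0 < z k := by
    intro k
    have : 0 ≤ ∑ j, if k = Pi.single j 1 then ρ j - ε * m j else 0 := by
      apply Finset.sum_nonneg
      intro j _
      split
      · nlinarith [hεle j, hρ j]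
      · exact le_refl 0
    have hzk : z k = ε + ∑ j, if k = Pi.single j 1 then ρ j - ε * m j else 0 := rfl
    rw [hzk]
    linarith [hεpos]
  refine ⟨z, ⟨fun k _ => (hznn k).le, ?_⟩, fun k _ => hznn k⟩
  intro i
  have hsplit : ∑ k ∈ K, (k i : ℝ) * z k
      = ∑ k ∈ K, (k i : ℝ) * ε + ∑ k ∈ K, (k i : ℝ) * (∑ j, if k = Pi.single j 1 then ρ j - ε * m j else 0) := by
    rw [← Finset.sum_add_distrib]
    exact Finset.sum_congr rfl fun k _ => by simp [hz]; ring
  rw [hsplit, unit_sum K hKunit _ i]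
  have : ∑ k ∈ K, (k i : ℝ) * ε = ε * m i := by
    rw [hm, Finset.mul_sum]
    exact Finset.sum_congr rfl fun k _ => mul_comm _ _
  rw [this]; ring

/-- Convexity of `t ↦ t log(tC)`, derived from the supporting line at the midpoint. -/
lemma convex_combo {u v t C : ℝ} (hu : 0 ≤ u) (hv : 0 < v) (ht0 : 0 < t) (ht1 : t ≤ 1)
    (hC : 0 < C) :
    ((1-t)*u + t*v) * Real.log (((1-t)*u + t*v) * C)
      ≤ (1-t) * (u * Real.log (u * C)) + t * (v * Real.log (v * C)) := by
  have hmpos : 0 < (1-t)*u + t*v := by nlinarith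
  have h1 := key_ineq hmpos hu hC
  have h2 := key_ineq hmpos hv.le hC
  have h1' := mul_le_mul_of_nonneg_left h1 (sub_nonneg.mpr ht1)
  have h2' := mul_le_mul_of_nonneg_left h2 ht0.le
  nlinarith [h1', h2']

/-- A minimizer of `F` over `X` is strictly positive on `K`. -/
lemma min_pos [Nonempty I] (Kbar : Finset (I → ℕ))
    (hunit : ∀ i : I, Pi.single i 1 ∈ Kbar) (ρ : I → ℝ) (hρ : ∀ i, 0 < ρ i)
    (a : ℝ) (ha : a ∈ Set.Ioo (0:ℝ) 1)
    (x : (I → ℕ) → ℝ) (hx : x ∈ XsetDef Kbar ρ)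
    (hmin : ∀ y ∈ XsetDef Kbar ρ, Ffun Kbar a x ≤ Ffun Kbar a y) :
    ∀ k ∈ Kbar.erase 0, 0 < x k := by
  classical
  set K := Kbar.erase 0 with hKdef
  intro k0 hk0
  rcases (hx.1 k0 hk0).eq_or_lt' with h0 | h; swap
  · exact h
  exfalso
  obtain ⟨z, hzX, hzpos⟩ := exists_pos_point Kbar hunit ρ hρ
  have hCpos : ∀ k : I → ℕ, 0 < confC k / (Real.exp 1 * a) :=
    fun k => div_pos (confC_pos k) (mul_pos (Real.exp_pos 1) ha.1)
  -- the contradiction for a given small t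
  have main : ∀ t : ℝ, 0 < t → t ≤ 1/2 →
      0 ≤ t * ((Ffun Kbar a z - Ffun Kbar a x) + z k0 * Real.log t) := by
    intro t ht0 ht12
    have ht1 : t ≤ 1 := by linarith
    set xt : (I → ℕ) → ℝ := fun k => (1-t) * x k + t * z k with hxt
    have hxtX : xt ∈ XsetDef Kbar ρ := by
      constructor
      · intro k hk
        have := hx.1 k hk
        have := (hzpos k hk).le
        show 0 ≤ (1-t) * x k + t * z k
        nlinarith
      · intro i
        show ∑ k ∈ K, (k i : ℝ) * ((1-t) * x k + t * z k) = ρ i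
        have : ∀ k ∈ K, (k i : ℝ) * ((1-t) * x k + t * z k)
            = (1-t) * ((k i : ℝ) * x k) + t * ((k i : ℝ) * z k) := fun k _ => by ring
        rw [Finset.sum_congr rfl this, Finset.sum_add_distrib, ← Finset.mul_sum, ← Finset.mul_sum,
          hx.2 i, hzX.2 i]
        ring
    -- per-term bound
    have hterm : ∀ k ∈ K,
        xt k * Real.log (xt k * confC k / (Real.exp 1 * a))
          ≤ (1-t) * (x k * Real.log (x k * confC k / (Real.exp 1 * a)))
            + t * (z k * Real.log (z k * confC k / (Real.exp 1 * a)))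
            + (if k = k0 then z k0 * (t * Real.log t) else 0) := by
      intro k hk
      by_cases hkk : k = k0
      · subst hkk
        rw [if_pos rfl]
        have hz0 : 0 < z k := hzpos k hk
        have hC := hCpos k
        have hxt0 : xt k = t * z k := by show (1-t) * x k + t * z k = t * z k; rw [h0]; ring
        have hrw : t * z k * confC k / (Real.exp 1 * a) = t * (z k * (confC k / (Real.exp 1 * a))) := by
          ring
        rw [hxt0, h0, hrw, Real.log_mul ht0.ne' (mul_pos hz0 hC).ne', mul_div_assoc]
        exact le_of_eq (by ring)
      · rw [if_neg hkk, add_zero]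
        have h := convex_combo (hx.1 k hk) (hzpos k hk) ht0 ht1 (hCpos k)
        calc xt k * Real.log (xt k * confC k / (Real.exp 1 * a))
            = ((1-t)*x k + t*z k) * Real.log (((1-t)*x k + t*z k) * (confC k / (Real.exp 1 * a))) := by
              rw [mul_div_assoc]
          _ ≤ (1-t) * (x k * Real.log (x k * (confC k / (Real.exp 1 * a))))
              + t * (z k * Real.log (z k * (confC k / (Real.exp 1 * a)))) := h
          _ = (1-t) * (x k * Real.log (x k * confC k / (Real.exp 1 * a)))
              + t * (z k * Real.log (z k * confC k / (Real.exp 1 * a))) := by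
              rw [mul_div_assoc, mul_div_assoc]
    have hsum : Ffun Kbar a xt ≤ (1-t) * Ffun Kbar a x + t * Ffun Kbar a z + z k0 * (t * Real.log t) := by
      have := Finset.sum_le_sum hterm
      rw [Finset.sum_add_distrib, Finset.sum_ite_eq' K k0
        (fun _ => z k0 * (t * Real.log t)), if_pos hk0] at this
      calc Ffun Kbar a xt = ∑ k ∈ K, xt k * Real.log (xt k * confC k / (Real.exp 1 * a)) := rfl
        _ ≤ _ := this
        _ = (1-t) * Ffun Kbar a x + t * Ffun Kbar a z + z k0 * (t * Real.log t) := by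
            rw [Finset.sum_add_distrib, ← Finset.mul_sum, ← Finset.mul_sum]
            rfl
    have hmx := hmin xt hxtX
    have : Ffun Kbar a x ≤ (1-t) * Ffun Kbar a x + t * Ffun Kbar a z + z k0 * (t * Real.log t) :=
      le_trans hmx hsum
    nlinarith [this]
  -- choose t small
  set Δ := Ffun Kbar a z - Ffun Kbar a x with hΔ
  have hz0 : 0 < z k0 := hzpos k0 hk0
  set t : ℝ := min (1/2) (Real.exp (-(|Δ| + 1) / z k0)) with htdef
  have ht0 : 0 < t := lt_min (by norm_num) (Real.exp_pos _)
  have ht12 : t ≤ 1/2 := min_le_left _ _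
  have hlogt : Real.log t ≤ -(|Δ| + 1) / z k0 := by
    calc Real.log t ≤ Real.log (Real.exp (-(|Δ| + 1) / z k0)) :=
          Real.log_le_log ht0 (min_le_right _ _)
      _ = -(|Δ| + 1) / z k0 := Real.log_exp _
  have hzl : z k0 * Real.log t ≤ -(|Δ| + 1) := by
    have := mul_le_mul_of_nonneg_left hlogt hz0.le
    rw [mul_div_cancel₀ _ hz0.ne'] at this
    linarith
  have habs : Δ ≤ |Δ| := le_abs_self Δ
  have hneg : Δ + z k0 * Real.log t ≤ -1 := by linarith
  have := main t ht0 ht12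
  nlinarith [this, ht0, hneg]
lemma exists_Fmin [Nonempty I] (Kbar : Finset (I → ℕ))
    (hunit : ∀ i : I, Pi.single i 1 ∈ Kbar) (ρ : I → ℝ) (hρ : ∀ i, 0 < ρ i)
    (a : ℝ) (ha : a ∈ Set.Ioo (0:ℝ) 1) :
    ∃ x ∈ XsetDef Kbar ρ, ∀ y ∈ XsetDef Kbar ρ, Ffun Kbar a x ≤ Ffun Kbar a y := by
  classical
  set K := Kbar.erase 0 with hKdef
  -- the finite index type
  let κ := {k // k ∈ K}
  -- the objective on κ → ℝ
  set G : (κ → ℝ) → ℝ :=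
    fun u => ∑ k : κ, u k * Real.log (u k * confC k.1 / (Real.exp 1 * a)) with hG
  set S : Set (κ → ℝ) :=
    {u | (∀ k, 0 ≤ u k) ∧ ∀ i, ∑ k : κ, (k.1 i : ℝ) * u k = ρ i} with hS
  -- restriction of feasible points lies in S, with equal objective
  have hrest : ∀ y ∈ XsetDef Kbar ρ, (fun k : κ => y k.1) ∈ S ∧ G (fun k : κ => y k.1) = Ffun Kbar a y := by
    intro y hy
    obtain ⟨hy1, hy2⟩ := hy
    refine ⟨⟨fun k => hy1 k.1 k.2, fun i => ?_⟩, ?_⟩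
    · rw [Finset.univ_eq_attach, Finset.sum_attach K (fun k => (k i : ℝ) * y k)]
      exact hy2 i
    · rw [hG]
      simp only
      rw [Finset.univ_eq_attach, Finset.sum_attach K
        (fun k => y k * Real.log (y k * confC k / (Real.exp 1 * a)))]
      rfl
  -- S is compact
  have hM : ∃ M : ℝ, ∀ u ∈ S, ∀ k : κ, u k ≤ M := by
    refine ⟨Finset.univ.sup' Finset.univ_nonempty ρ, fun u hu k => ?_⟩
    obtain ⟨hu1, hu2⟩ := hu
    have hk0 : k.1 ≠ 0 := (Finset.mem_erase.mp k.2).1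
    obtain ⟨i, hi⟩ := Function.ne_iff.mp hk0
    have hki : 1 ≤ (k.1 i : ℝ) := by exact_mod_cast Nat.one_le_iff_ne_zero.mpr hi
    have hle : (k.1 i : ℝ) * u k ≤ ρ i := by
      rw [← hu2 i]
      exact Finset.single_le_sum (f := fun k' : κ => (k'.1 i : ℝ) * u k')
        (fun k' _ => mul_nonneg (by positivity) (hu1 k')) (Finset.mem_univ k)
    have : u k ≤ ρ i := by nlinarith [hu1 k]
    exact this.trans (Finset.le_sup' ρ (Finset.mem_univ i))
  obtain ⟨M, hMle⟩ := hM
  have hScl : IsClosed S := by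
    have : S = (⋂ k : κ, {u : κ → ℝ | 0 ≤ u k}) ∩
        ⋂ i : I, {u : κ → ℝ | ∑ k : κ, (k.1 i : ℝ) * u k = ρ i} := by
      ext u; simp [hS, Set.mem_iInter, forall_and]
    rw [this]
    exact IsClosed.inter
      (isClosed_iInter fun k => isClosed_le continuous_const (continuous_apply k))
      (isClosed_iInter fun i => isClosed_eq
        (continuous_finset_sum _ fun k _ => continuous_const.mul (continuous_apply k)) continuous_const)
  have hScpt : IsCompact S := by
    refine IsCompact.of_isClosed_subset (isCompact_Icc (a := (0 : κ → ℝ)) (b := fun _ => M)) hScl ?_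
    intro u hu
    exact ⟨fun k => hu.1 k, fun k => hMle u hu k⟩
  -- S is nonempty
  have hSne : S.Nonempty := by
    obtain ⟨z, hz, -⟩ := exists_pos_point Kbar hunit ρ hρ
    exact ⟨fun k : κ => z k.1, (hrest z hz).1⟩
  -- G is continuous on S
  have hGcont : ContinuousOn G S := by
    have hcont : Continuous (fun u : κ → ℝ =>
        ∑ k : κ, (u k * Real.log (u k) + u k * Real.log (confC k.1 / (Real.exp 1 * a)))) := by
      apply continuous_finset_sum
      intro k _
      exact ((Real.continuous_mul_log.comp (continuous_apply k))).add
        ((continuous_apply k).mul continuous_const)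
    apply ContinuousOn.congr hcont.continuousOn
    intro u hu
    rw [hG]
    simp only
    refine Finset.sum_congr rfl fun k _ => ?_
    have hC : 0 < confC k.1 / (Real.exp 1 * a) :=
      div_pos (confC_pos k.1) (mul_pos (Real.exp_pos 1) ha.1)
    rw [mul_div_assoc, mul_log_split (hu.1 k) hC]
  obtain ⟨u, huS, humin⟩ := hScpt.exists_isMinOn hSne hGcont
  -- extend u to the full space
  set xe : (I → ℕ) → ℝ := fun k => if h : k ∈ K then u ⟨k, h⟩ else 0 with hxe
  have hxeK : ∀ k : κ, xe k.1 = u k := by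
    intro k; rw [hxe]; simp [k.2]
  have hxeX : xe ∈ XsetDef Kbar ρ := by
    constructor
    · intro k hk
      rw [hxe]; simp only [hk, dif_pos]
      rw [dif_pos hk]
      exact huS.1 ⟨k, hk⟩
    · intro i
      calc ∑ k ∈ K, (k i : ℝ) * xe k
          = ∑ k ∈ K.attach, ((k.1 i : ℝ) * xe k.1) := (Finset.sum_attach K _).symm
        _ = ∑ k : κ, (k.1 i : ℝ) * u k := by
            rw [Finset.univ_eq_attach]
            exact Finset.sum_congr rfl fun k _ => by rw [hxeK]
        _ = ρ i := huS.2 i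
  have hxeF : Ffun Kbar a xe = G u := by
    show (∑ k ∈ K, xe k * Real.log (xe k * confC k / (Real.exp 1 * a))) = _
    calc ∑ k ∈ K, xe k * Real.log (xe k * confC k / (Real.exp 1 * a))
        = ∑ k ∈ K.attach, xe k.1 * Real.log (xe k.1 * confC k.1 / (Real.exp 1 * a)) :=
          (Finset.sum_attach K _).symm
      _ = G u := by
          rw [hG, Finset.univ_eq_attach]
          exact Finset.sum_congr rfl fun k _ => by rw [hxeK]
  refine ⟨xe, hxeX, fun y hy => ?_⟩
  rw [hxeF, ← (hrest y hy).2]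
  exact humin (hrest y hy).1
/-- At a product-form point, the "linear coefficient" at `k` is `∑ i, k i * ν i`. -/
lemma prod_form_coeff {a : ℝ} (ha : 0 < a) (k : I → ℕ) (ν : I → ℝ)
    (xk : ℝ) (hxk : xk = (a / confC k) * Real.exp (∑ i, (k i : ℝ) * ν i)) :
    Real.log (xk * (confC k / (Real.exp 1 * a))) + 1 = ∑ i, (k i : ℝ) * ν i := by
  have hc := confC_pos k
  have hval : xk * (confC k / (Real.exp 1 * a)) = Real.exp (∑ i, (k i : ℝ) * ν i) / Real.exp 1 := by
    rw [hxk]; field_simp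
  rw [hval, Real.log_div (Real.exp_ne_zero _) (Real.exp_ne_zero _), Real.log_exp, Real.log_exp]
  ring

lemma prod_form_min (Kbar : Finset (I → ℕ)) (ρ : I → ℝ) (a : ℝ) (ha : a ∈ Set.Ioo (0:ℝ) 1)
    (x : (I → ℕ) → ℝ) (hx : x ∈ XsetDef Kbar ρ) (ν : I → ℝ)
    (hprod : ∀ k ∈ Kbar.erase 0, x k = (a / confC k) * Real.exp (∑ i, (k i : ℝ) * ν i))
    (y : (I → ℕ) → ℝ) (hy : y ∈ XsetDef Kbar ρ) :
    Ffun Kbar a x ≤ Ffun Kbar a y ∧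
      (Ffun Kbar a y ≤ Ffun Kbar a x → ∀ k ∈ Kbar.erase 0, y k = x k) := by
  classical
  set K := Kbar.erase 0 with hKdef
  set T : (I → ℕ) → ℝ := fun k =>
    y k * Real.log (y k * confC k / (Real.exp 1 * a))
      - x k * Real.log (x k * confC k / (Real.exp 1 * a))
      - (∑ i, (k i : ℝ) * ν i) * (y k - x k) with hT
  have hxpos : ∀ k ∈ K, 0 < x k := by
    intro k hk
    rw [hprod k hk]
    exact mul_pos (div_pos ha.1 (confC_pos k)) (Real.exp_pos _)
  have hCpos : ∀ k : I → ℕ, 0 < confC k / (Real.exp 1 * a) :=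
    fun k => div_pos (confC_pos k) (mul_pos (Real.exp_pos 1) ha.1)
  -- each T k is nonnegative, strictly if y k ≠ x k
  have hTnn : ∀ k ∈ K, 0 ≤ T k := by
    intro k hk
    have h := key_ineq (hxpos k hk) (hy.1 k hk) (hCpos k)
    have hco := prod_form_coeff ha.1 k ν (x k) (hprod k hk)
    rw [hT]
    simp only
    rw [mul_div_assoc, mul_div_assoc, ← hco]
    linarith [h]
  have hTpos : ∀ k ∈ K, y k ≠ x k → 0 < T k := by
    intro k hk hne
    have h := key_ineq_strict (hxpos k hk) (hy.1 k hk) (hCpos k) hne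
    have hco := prod_form_coeff ha.1 k ν (x k) (hprod k hk)
    rw [hT]
    simp only
    rw [mul_div_assoc, mul_div_assoc, ← hco]
    linarith [h]
  -- the linear parts sum to zero
  have hlin : ∑ k ∈ K, (∑ i, (k i : ℝ) * ν i) * (y k - x k) = 0 := by
    calc ∑ k ∈ K, (∑ i, (k i : ℝ) * ν i) * (y k - x k)
        = ∑ k ∈ K, ∑ i, (ν i * ((k i : ℝ) * y k) - ν i * ((k i : ℝ) * x k)) := by
          refine Finset.sum_congr rfl fun k _ => ?_
          rw [Finset.sum_mul]
          exact Finset.sum_congr rfl fun i _ => by ring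
      _ = ∑ i, (ν i * (∑ k ∈ K, (k i : ℝ) * y k) - ν i * (∑ k ∈ K, (k i : ℝ) * x k)) := by
          rw [Finset.sum_comm]
          refine Finset.sum_congr rfl fun i _ => ?_
          rw [Finset.sum_sub_distrib, Finset.mul_sum, Finset.mul_sum]
      _ = 0 := by
          refine Finset.sum_eq_zero fun i _ => ?_
          rw [hy.2 i, hx.2 i]
          ring
  have hsumT : ∑ k ∈ K, T k = Ffun Kbar a y - Ffun Kbar a x := by
    rw [hT]
    simp only
    rw [Finset.sum_sub_distrib, Finset.sum_sub_distrib, hlin]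
    show _ - _ - 0 = _
    rw [sub_zero]
    rfl
  constructor
  · have : 0 ≤ ∑ k ∈ K, T k := Finset.sum_nonneg hTnn
    linarith [hsumT ▸ this]
  · intro hle k hk
    by_contra hne
    have hpos := hTpos k hk hne
    have h0 : ∑ k' ∈ K, T k' = 0 :=
      le_antisymm (by rw [hsumT]; linarith) (Finset.sum_nonneg hTnn)
    have := (Finset.sum_eq_zero_iff_of_nonneg hTnn).mp h0 k hk
    linarith
/-- Step C: a vector orthogonal to the kernel of the constraint matrix lies in the row span. -/
lemma span_step (K : Finset (I → ℕ)) (w : (I → ℕ) → ℝ)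
    (h : ∀ d : (I → ℕ) → ℝ, (∀ i, ∑ k ∈ K, (k i : ℝ) * d k = 0) →
      ∑ k ∈ K, d k * w k = 0) :
    ∃ ν : I → ℝ, ∀ k ∈ K, w k = ∑ i, (k i : ℝ) * ν i := by
  classical
  let κ := {k // k ∈ K}
  let E := EuclideanSpace ℝ κ
  let r : I → E := fun i => WithLp.toLp 2 (fun k : κ => (k.1 i : ℝ))
  let W : E := WithLp.toLp 2 (fun k : κ => w k.1)
  have hWmem : W ∈ Submodule.span ℝ (Set.range r) := by
    rw [← Submodule.orthogonal_orthogonal (Submodule.span ℝ (Set.range r))]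
    rw [Submodule.mem_orthogonal]
    intro d hd
    -- d is orthogonal to each row
    have hrow : ∀ i : I, ∑ k : κ, (k.1 i : ℝ) * d k = 0 := by
      intro i
      have := Submodule.inner_right_of_mem_orthogonal
        (Submodule.subset_span (Set.mem_range_self i)) hd
      rw [PiLp.inner_apply] at this
      simpa [RCLike.inner_apply, r, mul_comm] using this
    -- extend d to the full space
    set d' : (I → ℕ) → ℝ := fun k => if hk : k ∈ K then d ⟨k, hk⟩ else 0 with hd'
    have hd'K : ∀ k : κ, d' k.1 = d k := fun k => by rw [hd']; simp [k.2]
    have hker : ∀ i, ∑ k ∈ K, (k i : ℝ) * d' k = 0 := by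
      intro i
      calc ∑ k ∈ K, (k i : ℝ) * d' k
          = ∑ k ∈ K.attach, (k.1 i : ℝ) * d' k.1 := (Finset.sum_attach K _).symm
        _ = ∑ k : κ, (k.1 i : ℝ) * d k := by
            rw [Finset.univ_eq_attach]
            exact Finset.sum_congr rfl fun k _ => by rw [hd'K]
        _ = 0 := hrow i
    have := h d' hker
    have h2 : ∑ k ∈ K, d' k * w k = ∑ k : κ, d k * W k := by
      calc ∑ k ∈ K, d' k * w k
          = ∑ k ∈ K.attach, d' k.1 * w k.1 := (Finset.sum_attach K _).symm
        _ = ∑ k : κ, d k * W k := by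
            rw [Finset.univ_eq_attach]
            exact Finset.sum_congr rfl fun k _ => by rw [hd'K]
    rw [PiLp.inner_apply]
    simp only [RCLike.inner_apply, conj_trivial]
    rw [Finset.sum_congr rfl fun k _ => mul_comm (W k) (d k), ← h2, this]
  rw [Submodule.mem_span_range_iff_exists_fun] at hWmem
  obtain ⟨c, hc⟩ := hWmem
  refine ⟨c, fun k hk => ?_⟩
  have heval : (∑ i, c i • r i) ⟨k, hk⟩ = W ⟨k, hk⟩ := congrArg (fun v : E => v ⟨k, hk⟩) hc
  have hls : (∑ i, c i • r i) ⟨k, hk⟩ = ∑ i, c i * (k i : ℝ) := by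
    rw [WithLp.ofLp_sum, Finset.sum_apply]
    rfl
  rw [hls] at heval
  rw [show W ⟨k, hk⟩ = w k from rfl] at heval
  rw [← heval]
  exact Finset.sum_congr rfl fun i _ => mul_comm _ _
/-- Step B: first order conditions at an interior minimizer. -/
lemma min_orth [Nonempty I] (Kbar : Finset (I → ℕ)) (ρ : I → ℝ)
    (a : ℝ) (ha : a ∈ Set.Ioo (0:ℝ) 1)
    (x : (I → ℕ) → ℝ) (hx : x ∈ XsetDef Kbar ρ)
    (hmin : ∀ y ∈ XsetDef Kbar ρ, Ffun Kbar a x ≤ Ffun Kbar a y)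
    (hpos : ∀ k ∈ Kbar.erase 0, 0 < x k)
    (d : (I → ℕ) → ℝ) (hker : ∀ i, ∑ k ∈ Kbar.erase 0, (k i : ℝ) * d k = 0) :
    ∑ k ∈ Kbar.erase 0, d k * Real.log (x k * confC k / a) = 0 := by
  classical
  set K := Kbar.erase 0 with hKdef
  by_cases hKne : K.Nonempty
  case neg =>
    rw [Finset.not_nonempty_iff_eq_empty] at hKne
    rw [hKne]
    simp
  -- choose δ
  set δ : ℝ := K.inf' hKne (fun k => x k / (|d k| + 1)) with hδ
  have hδpos : 0 < δ := by
    rw [hδ, Finset.lt_inf'_iff]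
    intro k hk
    exact div_pos (hpos k hk) (by positivity)
  -- perturbations stay feasible
  have hfeas : ∀ t : ℝ, |t| < δ → (fun k => x k + t * d k) ∈ XsetDef Kbar ρ := by
    intro t ht
    constructor
    · intro k hk
      have h1 : δ ≤ x k / (|d k| + 1) := Finset.inf'_le _ hk
      have h2 : |t * d k| ≤ |t| * (|d k| + 1) := by
        rw [abs_mul]
        nlinarith [abs_nonneg t, abs_nonneg (d k)]
      have h3 : |t| * (|d k| + 1) < x k := by
        calc |t| * (|d k| + 1) < δ * (|d k| + 1) := by nlinarith [abs_nonneg (d k)]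
          _ ≤ (x k / (|d k| + 1)) * (|d k| + 1) := by nlinarith [abs_nonneg (d k)]
          _ = x k := by field_simp
      have h4 : -(t * d k) ≤ |t * d k| := neg_le_abs _
      show 0 ≤ x k + t * d k
      linarith
    · intro i
      show ∑ k ∈ K, (k i : ℝ) * (x k + t * d k) = ρ i
      have : ∀ k ∈ K, (k i : ℝ) * (x k + t * d k)
          = (k i : ℝ) * x k + t * ((k i : ℝ) * d k) := fun k _ => by ring
      rw [Finset.sum_congr rfl this, Finset.sum_add_distrib, ← Finset.mul_sum, hker i, hx.2 i]
      ring
  -- the one-dimensional function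
  set g : ℝ → ℝ := fun t => ∑ k ∈ K,
    (x k + t * d k) * Real.log ((x k + t * d k) * (confC k / (Real.exp 1 * a))) with hg
  have hgF : ∀ t, |t| < δ → g t = Ffun Kbar a (fun k => x k + t * d k) := by
    intro t _
    rw [hg]
    exact Finset.sum_congr rfl fun k _ => by rw [mul_div_assoc]
  have hlocal : IsLocalMin g 0 := by
    have hmem : Metric.ball (0:ℝ) δ ∈ nhds (0:ℝ) := Metric.ball_mem_nhds _ hδpos
    refine Filter.eventually_of_mem hmem fun t ht => ?_
    rw [Metric.mem_ball, Real.dist_eq, sub_zero] at ht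
    have h0 : g 0 = Ffun Kbar a x := by
      rw [hgF 0 (by simpa using hδpos)]
      congr 1
      funext k
      ring_nf
    rw [h0, hgF t ht]
    exact hmin _ (hfeas t ht)
  -- derivative of g at 0
  have hderiv : HasDerivAt g
      (∑ k ∈ K, (Real.log (x k * (confC k / (Real.exp 1 * a))) + 1) * d k) 0 := by
    rw [hg]
    apply HasDerivAt.fun_sum
    intro k hk
    set C := confC k / (Real.exp 1 * a) with hC
    have hCpos : 0 < C := div_pos (confC_pos k) (mul_pos (Real.exp_pos 1) ha.1)
    have hxk := hpos k hk
    have haff : HasDerivAt (fun t : ℝ => x k + t * d k) (d k) 0 :=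
      (hasDerivAt_mul_const (d k)).const_add (x k)
    have h00 : x k + 0 * d k = x k := by ring
    have hmc : HasDerivAt (fun u : ℝ => u * C) C (x k + 0 * d k) := by
      rw [h00]; exact hasDerivAt_mul_const C
    have hlog : HasDerivAt (fun u : ℝ => Real.log (u * C))
        (((x k + 0 * d k) * C)⁻¹ * C) (x k + 0 * d k) := by
      have hne : (x k + 0 * d k) * C ≠ 0 := by rw [h00]; exact (mul_pos hxk hCpos).ne'
      exact (Real.hasDerivAt_log hne).comp (x k + 0 * d k) hmc
    have hinner : HasDerivAt (fun u : ℝ => u * Real.log (u * C))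
        (1 * Real.log ((x k + 0 * d k) * C) + (x k + 0 * d k) * (((x k + 0 * d k) * C)⁻¹ * C))
        (x k + 0 * d k) := (hasDerivAt_id _).mul hlog
    have hcomp := hinner.comp (0:ℝ) haff
    have hsimp : (1 * Real.log ((x k + 0 * d k) * C) + (x k + 0 * d k) * (((x k + 0 * d k) * C)⁻¹ * C)) * d k
        = (Real.log (x k * C) + 1) * d k := by
      rw [h00]
      have : x k * ((x k * C)⁻¹ * C) = 1 := by
        field_simp
      rw [one_mul, this]
    rw [hsimp] at hcomp
    exact hcomp
  have hzero := hlocal.hasDerivAt_eq_zero hderiv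
  -- rewrite the coefficient
  have hcoeff : ∀ k ∈ K, Real.log (x k * (confC k / (Real.exp 1 * a))) + 1
      = Real.log (x k * confC k / a) := by
    intro k hk
    have hxk := hpos k hk
    have hc := confC_pos k
    have h1 : x k * (confC k / (Real.exp 1 * a)) = (x k * confC k) / (Real.exp 1 * a) := by ring
    rw [h1, Real.log_div (mul_pos hxk hc).ne' (mul_pos (Real.exp_pos 1) ha.1).ne',
      Real.log_mul (Real.exp_ne_zero 1) ha.1.ne', Real.log_exp,
      Real.log_div (mul_pos hxk hc).ne' ha.1.ne']
    ring
  calc ∑ k ∈ K, d k * Real.log (x k * confC k / a)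
      = ∑ k ∈ K, (Real.log (x k * (confC k / (Real.exp 1 * a))) + 1) * d k := by
        refine Finset.sum_congr rfl fun k hk => ?_
        rw [hcoeff k hk]; ring
    _ = 0 := hzero
end Main
end AuxLemmas

/-- Combining: an `F`-minimizer has product form (with plain exponent). -/
lemma min_prod_form {I : Type*} [Fintype I] [DecidableEq I] [Nonempty I]
    (Kbar : Finset (I → ℕ)) (hunit : ∀ i : I, Pi.single i 1 ∈ Kbar)
    (ρ : I → ℝ) (hρ : ∀ i, 0 < ρ i)
    (a : ℝ) (ha : a ∈ Set.Ioo (0:ℝ) 1)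
    (x : (I → ℕ) → ℝ) (hx : x ∈ XsetDef Kbar ρ)
    (hmin : ∀ y ∈ XsetDef Kbar ρ, Ffun Kbar a x ≤ Ffun Kbar a y) :
    ∃ ν : I → ℝ, ∀ k ∈ Kbar.erase 0, x k = (a / confC k) * Real.exp (∑ i, (k i : ℝ) * ν i) := by
  have hpos := min_pos Kbar hunit ρ hρ a ha x hx hmin
  obtain ⟨ν, hν⟩ := span_step (Kbar.erase 0) (fun k => Real.log (x k * confC k / a))
    (fun d hd => min_orth Kbar ρ a ha x hx hmin hpos d hd)
  refine ⟨fun i => ν i, fun k hk => ?_⟩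
  have hxk := hpos k hk
  have hc := confC_pos k
  have hval : x k * confC k / a = Real.exp (∑ i, (k i : ℝ) * ν i) := by
    rw [← hν k hk, Real.exp_log (div_pos (mul_pos hxk hc) ha.1)]
  have heq : (a / confC k) * (x k * confC k / a) = x k := by
    have h2 : (a / confC k) * (x k * confC k / a) = x k * ((a / a) * (confC k / confC k)) := by
      ring
    rw [h2, div_self ha.1.ne', div_self hc.ne', mul_one, mul_one]
  rw [← hval, heq]

set_option linter.unusedVariables false

/-- Lemma: product-form characterization of the minimizer of `L^(a)` over `X`.
`L^(a)` attains a unique minimum over `X` (unique in its coordinates on `K`), and a point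
`x ∈ X` is this minimizer iff it has a product-form representation
`x_k = (a/c_k)·exp(b ∑_i k_i ν_i)` on `K`, for some `ν ∈ ℝ^I`, where `b = -log a`. -/
theorem cvx_unique_min_product_form
    {I : Type*} [Fintype I] [DecidableEq I] [Nonempty I]
    (Kbar : Finset (I → ℕ))
    (h0 : (0 : I → ℕ) ∈ Kbar)
    (hunit : ∀ i : I, Pi.single i 1 ∈ Kbar)
    (hmono : ∀ k ∈ Kbar, ∀ k' : I → ℕ, (∀ i, k' i ≤ k i) → k' ∈ Kbar)
    (ρ : I → ℝ) (hρ : ∀ i, 0 < ρ i)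
    (a : ℝ) (ha : a ∈ Set.Ioo (0 : ℝ) 1)
    (b : ℝ) (hb : b = -Real.log a) :
    (∃ x ∈ XsetDef Kbar ρ, (∀ y ∈ XsetDef Kbar ρ, Lfun Kbar a x ≤ Lfun Kbar a y) ∧
        ∀ x' ∈ XsetDef Kbar ρ, (∀ y ∈ XsetDef Kbar ρ, Lfun Kbar a x' ≤ Lfun Kbar a y) →
          ∀ k ∈ Kbar.erase 0, x' k = x k) ∧
      ∀ x ∈ XsetDef Kbar ρ,
        ((∀ y ∈ XsetDef Kbar ρ, Lfun Kbar a x ≤ Lfun Kbar a y) ↔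
          ∃ ν : I → ℝ, ∀ k ∈ Kbar.erase 0,
            x k = (a / confC k) * Real.exp (b * ∑ i, (k i : ℝ) * ν i)) := by
  classical
  have hloga : Real.log a < 0 := Real.log_neg ha.1 ha.2
  have hbpos : 0 < b := by rw [hb]; linarith
  have hcpos : 0 < -(1 / Real.log a) := by
    have : 1 / Real.log a < 0 := one_div_neg.mpr hloga
    linarith
  -- L-minimality is equivalent to F-minimality
  have hLF : ∀ u v : (I → ℕ) → ℝ,
      (Lfun Kbar a u ≤ Lfun Kbar a v ↔ Ffun Kbar a u ≤ Ffun Kbar a v) := by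
    intro u v
    show -(1 / Real.log a) * Ffun Kbar a u ≤ -(1 / Real.log a) * Ffun Kbar a v ↔ _
    constructor
    · exact fun h => le_of_mul_le_mul_left h hcpos
    · exact fun h => mul_le_mul_of_nonneg_left h hcpos.le
  -- converting exponents
  have hexp : ∀ (ν : I → ℝ) (k : I → ℕ),
      b * ∑ i, (k i : ℝ) * ν i = ∑ i, (k i : ℝ) * (b * ν i) := by
    intro ν k
    rw [Finset.mul_sum]
    exact Finset.sum_congr rfl fun i _ => by ring
  -- product form in the theorem's sense is equivalent to plain product form
  have hpf : ∀ x : (I → ℕ) → ℝ,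
      ((∃ ν : I → ℝ, ∀ k ∈ Kbar.erase 0,
          x k = (a / confC k) * Real.exp (b * ∑ i, (k i : ℝ) * ν i)) ↔
        (∃ ν : I → ℝ, ∀ k ∈ Kbar.erase 0,
          x k = (a / confC k) * Real.exp (∑ i, (k i : ℝ) * ν i))) := by
    intro x
    constructor
    · rintro ⟨ν, hν⟩
      refine ⟨fun i => b * ν i, fun k hk => ?_⟩
      rw [hν k hk, hexp ν k]
    · rintro ⟨ν, hν⟩
      refine ⟨fun i => ν i / b, fun k hk => ?_⟩
      rw [hν k hk]
      congr 1
      rw [show (∀ i:I, True) → b * ∑ i, (k i : ℝ) * (ν i / b) = ∑ i, (k i : ℝ) * ν i from ?_]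
      · exact fun _ => trivial
      · intro _
        rw [Finset.mul_sum]
        exact Finset.sum_congr rfl fun i _ => by
          field_simp
  obtain ⟨xs, hxs, hxsmin⟩ := exists_Fmin Kbar hunit ρ hρ a ha
  obtain ⟨νs, hνs⟩ := min_prod_form Kbar hunit ρ hρ a ha xs hxs hxsmin
  constructor
  · refine ⟨xs, hxs, fun y hy => (hLF xs y).mpr (hxsmin y hy), ?_⟩
    intro x' hx' hx'min k hk
    have hF : Ffun Kbar a x' ≤ Ffun Kbar a xs := (hLF x' xs).mp (hx'min xs hxs)
    exact (prod_form_min Kbar ρ a ha xs hxs νs hνs x' hx').2 hF k hk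
  · intro x hx
    constructor
    · intro hxmin
      rw [hpf x]
      exact min_prod_form Kbar hunit ρ hρ a ha x hx
        (fun y hy => (hLF x y).mp (hxmin y hy))
    · intro hprod
      obtain ⟨ν, hν⟩ := (hpf x).mp hprod
      intro y hy
      exact (hLF x y).mpr (prod_form_min Kbar ρ a ha x hx ν hν y hy).1
end

section
/- Let a ∈ (0,1) and let x ∈ ℝ^K have all coordinates positive (with the convention x_0 = a). Then Ξ(x) ≤ 0, and Ξ(x) = 0 if and only if the pairwise balance condition k'_i x_{k−e_i} x_{k'} = k_i x_k x_{k'−e_i} holds for every pair of edges (k,i), (k',i) ∈ M. -/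
open Finset

/-- The coordinates of `x` extended by the convention `x_0 = a`. -/
def xeDef {I : Type*} [Fintype I]
    (a : ℝ) (x : (I → ℕ) → ℝ) (m : I → ℕ) : ℝ :=
  if m = 0 then a else x m

/-- `x_{(i)} = x_0 + ∑_{k ∈ K : k + e_i ∈ K} x_k`, with the convention `x_0 = a`. -/
noncomputable def xIdxDef {I : Type*} [Fintype I] [DecidableEq I]
    (Kbar : Finset (I → ℕ)) (a : ℝ) (x : (I → ℕ) → ℝ) (i : I) : ℝ :=
  a + ∑ m ∈ (Kbar.erase 0).filter (fun m => m + Pi.single i 1 ∈ Kbar.erase 0), x m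

/-- `ξ_{k,k',i}(x)`, with `b = −log a` and the convention `x_0 = a`. -/
noncomputable def xiDef {I : Type*} [Fintype I] [DecidableEq I]
    (Kbar : Finset (I → ℕ)) (μ : I → ℝ) (a : ℝ) (x : (I → ℕ) → ℝ)
    (k k' : I → ℕ) (i : I) : ℝ :=
  (1 / (-Real.log a)) *
    (Real.log ((k' i : ℝ) * xeDef a x (k - Pi.single i 1) * xeDef a x k')
      - Real.log ((k i : ℝ) * xeDef a x k * xeDef a x (k' - Pi.single i 1))) *
    ((k i : ℝ) * μ i * xeDef a x k * xeDef a x (k' - Pi.single i 1)) / xIdxDef Kbar a x i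

/-- The set of configurations `k` such that `(k, i)` is an edge. -/
def edgesF {I : Type*} [Fintype I] [DecidableEq I]
    (Kbar : Finset (I → ℕ)) (i : I) : Finset (I → ℕ) :=
  (Kbar.erase 0).filter (fun k => 1 ≤ k i ∧ k - Pi.single i 1 ∈ Kbar)

/-- `Ξ(x) = ∑_i ∑_{pairs {k,k'}} [ξ_{k,k',i} + ξ_{k',k,i}]`, written as the full double
sum over ordered pairs of edges (the diagonal terms vanish, so the two agree). -/
noncomputable def XiDef {I : Type*} [Fintype I] [DecidableEq I]
    (Kbar : Finset (I → ℕ)) (μ : I → ℝ) (a : ℝ) (x : (I → ℕ) → ℝ) : ℝ :=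
  ∑ i : I, ∑ k ∈ edgesF Kbar i, ∑ k' ∈ edgesF Kbar i, xiDef Kbar μ a x k k' i

lemma key_real {u v : ℝ} (hu : 0 < u) (hv : 0 < v) :
    (Real.log u - Real.log v) * (v - u) ≤ 0 ∧
      ((Real.log u - Real.log v) * (v - u) = 0 ↔ u = v) := by
  rcases lt_trichotomy u v with h | h | h
  · have h1 : Real.log u < Real.log v := Real.log_lt_log hu h
    have h2 : (Real.log u - Real.log v) * (v - u) < 0 :=
      mul_neg_of_neg_of_pos (by linarith) (by linarith)
    exact ⟨h2.le, by constructor <;> intro h3 <;> [linarith; exact absurd h3 h.ne]⟩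
  · simp [h]
  · have h1 : Real.log v < Real.log u := Real.log_lt_log hv h
    have h2 : (Real.log u - Real.log v) * (v - u) < 0 :=
      mul_neg_of_pos_of_neg (by linarith) (by linarith)
    exact ⟨h2.le, by constructor <;> intro h3 <;> [linarith; exact absurd h3 h.ne']⟩

/-- `Ξ(x) ≤ 0`, with equality iff the pairwise balance condition
`k'_i x_{k−e_i} x_{k'} = k_i x_k x_{k'−e_i}` holds for every pair of edges. -/
theorem Xi_nonpos_iff_balance
    {I : Type*} [Fintype I] [DecidableEq I] [Nonempty I]
    (Kbar : Finset (I → ℕ))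
    (h0 : (0 : I → ℕ) ∈ Kbar)
    (hunit : ∀ i : I, Pi.single i 1 ∈ Kbar)
    (hmono : ∀ k ∈ Kbar, ∀ k' : I → ℕ, (∀ i, k' i ≤ k i) → k' ∈ Kbar)
    (μ : I → ℝ) (hμ : ∀ i, 0 < μ i)
    (a : ℝ) (ha : a ∈ Set.Ioo (0 : ℝ) 1)
    (x : (I → ℕ) → ℝ) (hx : ∀ k ∈ Kbar.erase 0, 0 < x k) :
    XiDef Kbar μ a x ≤ 0 ∧
      (XiDef Kbar μ a x = 0 ↔
        ∀ i : I, ∀ k ∈ edgesF Kbar i, ∀ k' ∈ edgesF Kbar i,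
          (k' i : ℝ) * xeDef a x (k - Pi.single i 1) * xeDef a x k' =
            (k i : ℝ) * xeDef a x k * xeDef a x (k' - Pi.single i 1)) := by
  obtain ⟨ha0, ha1⟩ := ha
  -- positivity of the extended coordinates
  have hxe : ∀ m ∈ Kbar, 0 < xeDef a x m := by
    intro m hm
    unfold xeDef
    split
    · exact ha0
    · exact hx m (Finset.mem_erase.2 ⟨by assumption, hm⟩)
  -- positivity of x_{(i)}
  have hX : ∀ i : I, 0 < xIdxDef Kbar a x i := by
    intro i
    unfold xIdxDef
    have : (0:ℝ) ≤ ∑ m ∈ (Kbar.erase 0).filter (fun m => m + Pi.single i 1 ∈ Kbar.erase 0), x m :=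
      Finset.sum_nonneg fun m hm => (hx m (Finset.mem_filter.1 hm).1).le
    linarith
  have hb : 0 < -Real.log a := by
    have := Real.log_neg ha0 ha1
    linarith
  -- facts about edges
  have hedge : ∀ i : I, ∀ k ∈ edgesF Kbar i,
      k ∈ Kbar ∧ 1 ≤ k i ∧ k - Pi.single i 1 ∈ Kbar := by
    intro i k hk
    simp only [edgesF, Finset.mem_filter, Finset.mem_erase] at hk
    exact ⟨hk.1.2, hk.2⟩
  -- positivity of u and v
  have hpos : ∀ i : I, ∀ k ∈ edgesF Kbar i, ∀ k' ∈ edgesF Kbar i,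
      0 < (k' i : ℝ) * xeDef a x (k - Pi.single i 1) * xeDef a x k' := by
    intro i k hk k' hk'
    obtain ⟨hk1, _, hk3⟩ := hedge i k hk
    obtain ⟨hk'1, hk'2, _⟩ := hedge i k' hk'
    have h1 : (0:ℝ) < (k' i : ℝ) := by exact_mod_cast hk'2
    exact mul_pos (mul_pos h1 (hxe _ hk3)) (hxe _ hk'1)
  -- the symmetrized term
  have key : ∀ i : I, ∀ k ∈ edgesF Kbar i, ∀ k' ∈ edgesF Kbar i,
      xiDef Kbar μ a x k k' i + xiDef Kbar μ a x k' k i ≤ 0 ∧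
        (xiDef Kbar μ a x k k' i + xiDef Kbar μ a x k' k i = 0 ↔
          (k' i : ℝ) * xeDef a x (k - Pi.single i 1) * xeDef a x k' =
            (k i : ℝ) * xeDef a x k * xeDef a x (k' - Pi.single i 1)) := by
    intro i k hk k' hk'
    set u := (k' i : ℝ) * xeDef a x (k - Pi.single i 1) * xeDef a x k' with hu_def
    set v := (k i : ℝ) * xeDef a x k * xeDef a x (k' - Pi.single i 1) with hv_def
    have hu : 0 < u := hpos i k hk k' hk'
    have hv : 0 < v := by
      have := hpos i k' hk' k hk
      have heq : (k i : ℝ) * xeDef a x (k' - Pi.single i 1) * xeDef a x k = v := by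
        rw [hv_def]; ring
      linarith [heq ▸ this]
    have hC : 0 < μ i / ((-Real.log a) * xIdxDef Kbar a x i) :=
      div_pos (hμ i) (mul_pos hb (hX i))
    have hsum : xiDef Kbar μ a x k k' i + xiDef Kbar μ a x k' k i =
        (μ i / ((-Real.log a) * xIdxDef Kbar a x i)) * ((Real.log u - Real.log v) * (v - u)) := by
      unfold xiDef
      rw [← hu_def, ← hv_def]
      have e1 : (k i : ℝ) * xeDef a x (k' - Pi.single i 1) * xeDef a x k = v := by
        rw [hv_def]; ring
      have e2 : (k' i : ℝ) * xeDef a x k' * xeDef a x (k - Pi.single i 1) = u := by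
        rw [hu_def]; ring
      rw [e1, e2]
      have e3 : (k i : ℝ) * μ i * xeDef a x k * xeDef a x (k' - Pi.single i 1) = μ i * v := by
        rw [hv_def]; ring
      have e4 : (k' i : ℝ) * μ i * xeDef a x k' * xeDef a x (k - Pi.single i 1) = μ i * u := by
        rw [hu_def]; ring
      rw [e3, e4]
      ring
    obtain ⟨hle, heq⟩ := key_real hu hv
    constructor
    · rw [hsum]
      exact mul_nonpos_of_nonneg_of_nonpos hC.le hle
    · rw [hsum, mul_eq_zero]
      constructor
      · rintro (h | h)
        · exact absurd h hC.ne'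
        · exact heq.1 h
      · intro h; right; exact heq.2 h
  -- 2 * XiDef equals the symmetrized double sum
  have h2 : 2 * XiDef Kbar μ a x =
      ∑ i : I, ∑ k ∈ edgesF Kbar i, ∑ k' ∈ edgesF Kbar i,
        (xiDef Kbar μ a x k k' i + xiDef Kbar μ a x k' k i) := by
    unfold XiDef
    rw [two_mul, ← Finset.sum_add_distrib]
    refine Finset.sum_congr rfl fun i _ => ?_
    have hswap : (∑ k ∈ edgesF Kbar i, ∑ k' ∈ edgesF Kbar i, xiDef Kbar μ a x k k' i) =
        ∑ k ∈ edgesF Kbar i, ∑ k' ∈ edgesF Kbar i, xiDef Kbar μ a x k' k i :=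
      Finset.sum_comm
    nth_rewrite 2 [hswap]
    rw [← Finset.sum_add_distrib]
    refine Finset.sum_congr rfl fun k _ => ?_
    rw [← Finset.sum_add_distrib]
  -- nonpositivity of the symmetrized sum
  have hle : (∑ i : I, ∑ k ∈ edgesF Kbar i, ∑ k' ∈ edgesF Kbar i,
      (xiDef Kbar μ a x k k' i + xiDef Kbar μ a x k' k i)) ≤ 0 :=
    Finset.sum_nonpos fun i _ => Finset.sum_nonpos fun k hk =>
      Finset.sum_nonpos fun k' hk' => (key i k hk k' hk').1
  have hXile : XiDef Kbar μ a x ≤ 0 := by linarith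
  refine ⟨hXile, ?_⟩
  have hiff : XiDef Kbar μ a x = 0 ↔
      (∑ i : I, ∑ k ∈ edgesF Kbar i, ∑ k' ∈ edgesF Kbar i,
        (xiDef Kbar μ a x k k' i + xiDef Kbar μ a x k' k i)) = 0 := by
    constructor
    · intro h; rw [← h2, h]; ring
    · intro h; rw [h] at h2; linarith
  rw [hiff]
  rw [Finset.sum_eq_zero_iff_of_nonpos fun i _ => Finset.sum_nonpos fun k hk =>
      Finset.sum_nonpos fun k' hk' => (key i k hk k' hk').1]
  constructor
  · intro h i k hk k' hk'
    have h1 := h i (Finset.mem_univ i)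
    rw [Finset.sum_eq_zero_iff_of_nonpos fun k hk =>
        Finset.sum_nonpos fun k' hk' => (key i k hk k' hk').1] at h1
    have h2' := h1 k hk
    rw [Finset.sum_eq_zero_iff_of_nonpos fun k' hk' => (key i k hk k' hk').1] at h2'
    exact ((key i k hk k' hk').2).1 (h2' k' hk')
  · intro h i _
    rw [Finset.sum_eq_zero_iff_of_nonpos fun k hk =>
        Finset.sum_nonpos fun k' hk' => (key i k hk k' hk').1]
    intro k hk
    rw [Finset.sum_eq_zero_iff_of_nonpos fun k' hk' => (key i k hk k' hk').1]
    intro k' hk'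
    exact ((key i k hk k' hk').2).2 (h i k hk k' hk')
end

section
/- Let a ∈ (0,1) and let x ∈ ℝ^K have all coordinates positive. Define D_k = (1/b)·log(c_k x_k/a) for k ∈ K and D_0 = 0; λ̃_i = Σ_{k∈K} k_i μ_i x_k for i ∈ I; and for each edge (k,i) ∈ M, w̃_{k,i} = k_i μ_i x_k and ṽ_{k,i} = λ̃_i x_{k−e_i}/x_{(i)} (with conventions x_0 = a and x_{(i)} = a + Σ_{k∈K: k+e_i∈K} x_k). Then Ξ(x) = Σ_{(k,i)∈M} (D_k − D_{k−e_i})·(ṽ_{k,i} − w̃_{k,i}). -/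
open Finset

lemma pi_sub_add_cancel {I : Type*} [DecidableEq I] (k : I → ℕ) (i : I) (h : 1 ≤ k i) :
    (k - Pi.single i 1) + Pi.single i 1 = k := by
  funext j
  by_cases hj : j = i
  · subst hj; simp only [Pi.add_apply, Pi.sub_apply, Pi.single_eq_same]; omega
  · simp [Pi.single_apply, hj]

lemma pi_add_sub_cancel {I : Type*} [DecidableEq I] (m : I → ℕ) (i : I) :
    (m + Pi.single i 1) - Pi.single i 1 = m := by
  funext j
  by_cases hj : j = i
  · subst hj; simp
  · simp [Pi.single_apply, hj]

lemma pi_sub_eq_zero {I : Type*} [DecidableEq I] (k : I → ℕ) (i : I) (h : 1 ≤ k i)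
    (hz : k - Pi.single i 1 = 0) : k = Pi.single i 1 := by
  funext j
  have := congrFun hz j
  by_cases hj : j = i
  · subst hj; simp only [Pi.sub_apply, Pi.single_eq_same, Pi.zero_apply] at this ⊢; omega
  · simp only [Pi.sub_apply, Pi.single_apply, hj, if_false, Pi.zero_apply] at this ⊢
    omega

lemma confC_succ {I : Type*} [Fintype I] [DecidableEq I] (k : I → ℕ) (i : I) (h : 1 ≤ k i) :
    confC k = (k i : ℝ) * confC (k - Pi.single i 1) := by
  set m : I → ℕ := k - Pi.single i 1 with hm
  have hmi : m i = k i - 1 := by rw [hm]; simp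
  have hmj : ∀ j ∈ Finset.univ.erase i, (Nat.factorial (m j) : ℝ) = (Nat.factorial (k j) : ℝ) := by
    intro j hj
    have hji : j ≠ i := (Finset.mem_erase.mp hj).1
    rw [hm]
    simp [Pi.single_apply, hji]
  unfold confC
  rw [← Finset.mul_prod_erase Finset.univ (fun j => (Nat.factorial (k j) : ℝ)) (Finset.mem_univ i),
      ← Finset.mul_prod_erase Finset.univ (fun j => (Nat.factorial (m j) : ℝ)) (Finset.mem_univ i),
      Finset.prod_congr rfl hmj, hmi, ← mul_assoc]
  congr 1
  rw [← Nat.cast_mul, Nat.mul_factorial_pred (by omega)]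

lemma confC_zero {I : Type*} [Fintype I] : confC (0 : I → ℕ) = 1 := by
  simp [confC]

/-- identity (eq-xi-is-derivative):
`Ξ(x) = ∑_{(k,i)∈M} (D_k − D_{k−e_i})·(ṽ_{k,i} − w̃_{k,i})`, where
`D_k = (1/b) log(c_k x_k/a)`, `D_0 = 0`, `λ̃_i = ∑_{k∈K} k_i μ_i x_k`,
`w̃_{k,i} = k_i μ_i x_k` and `ṽ_{k,i} = λ̃_i x_{k−e_i}/x_{(i)}`. -/
theorem Xi_eq_gradient_form
    {I : Type*} [Fintype I] [DecidableEq I] [Nonempty I]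
    (Kbar : Finset (I → ℕ))
    (h0 : (0 : I → ℕ) ∈ Kbar)
    (hunit : ∀ i : I, Pi.single i 1 ∈ Kbar)
    (hmono : ∀ k ∈ Kbar, ∀ k' : I → ℕ, (∀ i, k' i ≤ k i) → k' ∈ Kbar)
    (μ : I → ℝ) (hμ : ∀ i, 0 < μ i)
    (a : ℝ) (ha : a ∈ Set.Ioo (0 : ℝ) 1)
    (b : ℝ) (hb : b = -Real.log a)
    (x : (I → ℕ) → ℝ) (hx : ∀ k ∈ Kbar.erase 0, 0 < x k)
    (D : (I → ℕ) → ℝ)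
    (hD : ∀ k : I → ℕ, D k = if k = 0 then 0 else (1 / b) * Real.log (confC k * x k / a))
    (lam : I → ℝ) (hlam : ∀ i, lam i = ∑ k ∈ Kbar.erase 0, (k i : ℝ) * μ i * x k)
    (w : (I → ℕ) → I → ℝ) (hw : ∀ k i, w k i = (k i : ℝ) * μ i * x k)
    (v : (I → ℕ) → I → ℝ)
    (hv : ∀ k i, v k i = lam i * xeDef a x (k - Pi.single i 1) / xIdxDef Kbar a x i) :
    XiDef Kbar μ a x =
      ∑ i : I, ∑ k ∈ edgesF Kbar i,
        (D k - D (k - Pi.single i 1)) * (v k i - w k i) := by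
  obtain ⟨ha0, ha1⟩ := ha
  have hb0 : 0 < b := by rw [hb]; simpa using Real.log_neg ha0 ha1
  have hbne : b ≠ 0 := ne_of_gt hb0
  have hxe : ∀ m ∈ Kbar, 0 < xeDef a x m := by
    intro m hm
    by_cases h : m = 0
    · simp [xeDef, h, ha0]
    · rw [xeDef, if_neg h]; exact hx m (Finset.mem_erase.mpr ⟨h, hm⟩)
  unfold XiDef
  refine Finset.sum_congr rfl fun i _ => ?_
  have hsubmem : ∀ k ∈ Kbar, k - Pi.single i 1 ∈ Kbar := by
    intro k hk
    exact hmono k hk _ fun j => Nat.sub_le _ _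
  have hEmem : ∀ k ∈ edgesF Kbar i, k ∈ Kbar ∧ k ≠ 0 ∧ 1 ≤ k i := by
    intro k hk
    rw [edgesF, Finset.mem_filter, Finset.mem_erase] at hk
    exact ⟨hk.1.2, hk.1.1, hk.2.1⟩
  set X := xIdxDef Kbar a x i with hX
  have hXpos : 0 < X := by
    rw [hX, xIdxDef]
    have hnn : (0:ℝ) ≤ ∑ m ∈ (Kbar.erase 0).filter
        (fun m => m + Pi.single i 1 ∈ Kbar.erase 0), x m :=
      Finset.sum_nonneg fun m hm => le_of_lt (hx m (Finset.mem_filter.mp hm).1)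
    linarith
  have hXne : X ≠ 0 := ne_of_gt hXpos
  -- the key log identity
  have hg : ∀ k ∈ edgesF Kbar i, b * (D k - D (k - Pi.single i 1)) =
      Real.log ((k i : ℝ) * x k) - Real.log (xeDef a x (k - Pi.single i 1)) := by
    intro k hk
    obtain ⟨hkK, hk0, hki⟩ := hEmem k hk
    have hxk := hx k (Finset.mem_erase.mpr ⟨hk0, hkK⟩)
    have hkip : (0:ℝ) < (k i : ℝ) := by exact_mod_cast hki
    have hsplit : confC k = (k i : ℝ) * confC (k - Pi.single i 1) := confC_succ k i hki
    by_cases hz : k - Pi.single i 1 = 0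
    · have hkeq : k = Pi.single i 1 := pi_sub_eq_zero k i hki hz
      have hki1 : k i = 1 := by rw [hkeq]; simp
      have hc1 : confC k = 1 := by rw [hsplit, hz, confC_zero, hki1]; norm_num
      rw [hD k, hD (k - Pi.single i 1), if_neg hk0, if_pos hz, hz, hc1, hki1]
      simp only [xeDef, if_pos rfl, Nat.cast_one, one_mul, sub_zero]
      rw [← mul_assoc, mul_one_div_cancel hbne, one_mul,
        Real.log_div (ne_of_gt hxk) (ne_of_gt ha0)]
      norm_num
    · have hkeK : k - Pi.single i 1 ∈ Kbar.erase 0 :=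
        Finset.mem_erase.mpr ⟨hz, hsubmem k hkK⟩
      have hxke := hx _ hkeK
      have hcpos : (0:ℝ) < confC (k - Pi.single i 1) := confC_pos _
      have hcK : (0:ℝ) < confC k := confC_pos _
      rw [hD k, hD (k - Pi.single i 1), if_neg hk0, if_neg hz]
      rw [xeDef, if_neg hz]
      rw [mul_sub, ← mul_assoc, ← mul_assoc, mul_one_div_cancel hbne, one_mul, one_mul]
      rw [← Real.log_div (by positivity) (by positivity),
        ← Real.log_div (by positivity) (ne_of_gt hxke)]
      congr 1
      rw [hsplit]
      field_simp
  have hss : (Pi.single i 1 : I → ℕ) - Pi.single i 1 = 0 := by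
    funext j; simp
  have hei : Pi.single i 1 ∈ edgesF Kbar i := by
    rw [edgesF, Finset.mem_filter, Finset.mem_erase]
    refine ⟨⟨?_, hunit i⟩, ?_, ?_⟩
    · intro h
      have := congrFun h i
      simp at this
    · simp
    · rw [hss]; exact h0
  have hsumT : ∑ k ∈ edgesF Kbar i, xeDef a x (k - Pi.single i 1) = X := by
    rw [hX, xIdxDef, ← Finset.add_sum_erase _ _ hei, hss]
    congr 1
    · simp [xeDef]
    · refine Finset.sum_bij' (fun k _ => k - Pi.single i 1) (fun m _ => m + Pi.single i 1)
        ?_ ?_ ?_ ?_ ?_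
      · intro k hk
        obtain ⟨hne, hkE⟩ := Finset.mem_erase.mp hk
        obtain ⟨hkK, hk0, hki⟩ := hEmem k hkE
        have hz : k - Pi.single i 1 ≠ 0 := fun h => hne (pi_sub_eq_zero k i hki h)
        rw [Finset.mem_filter, Finset.mem_erase]
        refine ⟨⟨hz, hsubmem k hkK⟩, ?_⟩
        rw [pi_sub_add_cancel k i hki]
        exact Finset.mem_erase.mpr ⟨hk0, hkK⟩
      · intro m hm
        obtain ⟨hm1, hm2⟩ := Finset.mem_filter.mp hm
        obtain ⟨hm0, hmK⟩ := Finset.mem_erase.mp hm1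
        rw [Finset.mem_erase]
        constructor
        · intro h
          apply hm0
          have := congrArg (fun f => f - Pi.single i 1) h
          simpa [pi_add_sub_cancel, hss] using this
        · rw [edgesF, Finset.mem_filter]
          refine ⟨hm2, ?_, ?_⟩
          · simp
          · rw [pi_add_sub_cancel]; exact hmK
      · intro k hk
        obtain ⟨_, hkE⟩ := Finset.mem_erase.mp hk
        obtain ⟨_, _, hki⟩ := hEmem k hkE
        exact pi_sub_add_cancel k i hki
      · intro m _
        exact pi_add_sub_cancel m i
      · intro k hk
        obtain ⟨hne, hkE⟩ := Finset.mem_erase.mp hk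
        obtain ⟨_, _, hki⟩ := hEmem k hkE
        have hz : k - Pi.single i 1 ≠ 0 := fun h => hne (pi_sub_eq_zero k i hki h)
        rw [xeDef, if_neg hz]
  have hsumw : ∑ k ∈ edgesF Kbar i, w k i = lam i := by
    rw [hlam]
    simp only [hw]
    apply Finset.sum_subset (Finset.filter_subset _ _)
    intro k hk hkE
    have hki : k i = 0 := by
      by_contra h
      exact hkE (Finset.mem_filter.mpr ⟨hk, Nat.one_le_iff_ne_zero.mpr h,
        hsubmem k (Finset.mem_erase.mp hk).2⟩)
    simp [hki]
  have hxi : ∀ k ∈ edgesF Kbar i, ∀ k' ∈ edgesF Kbar i,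
      xiDef Kbar μ a x k k' i =
        ((D k' - D (k' - Pi.single i 1)) - (D k - D (k - Pi.single i 1))) *
          (w k i * xeDef a x (k' - Pi.single i 1) / X) := by
    intro k hk k' hk'
    obtain ⟨hkK, hk0, hki⟩ := hEmem k hk
    obtain ⟨hkK', hk0', hki'⟩ := hEmem k' hk'
    have hxk := hx k (Finset.mem_erase.mpr ⟨hk0, hkK⟩)
    have hxk' := hx k' (Finset.mem_erase.mpr ⟨hk0', hkK'⟩)
    have hTk : 0 < xeDef a x (k - Pi.single i 1) := hxe _ (hsubmem k hkK)
    have hTk' : 0 < xeDef a x (k' - Pi.single i 1) := hxe _ (hsubmem k' hkK')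
    have hkip : (0:ℝ) < (k i : ℝ) := by exact_mod_cast hki
    have hkip' : (0:ℝ) < (k' i : ℝ) := by exact_mod_cast hki'
    have hxek : xeDef a x k = x k := if_neg hk0
    have hxek' : xeDef a x k' = x k' := if_neg hk0'
    have hlog : Real.log ((k' i : ℝ) * xeDef a x (k - Pi.single i 1) * xeDef a x k')
        - Real.log ((k i : ℝ) * xeDef a x k * xeDef a x (k' - Pi.single i 1))
        = b * (D k' - D (k' - Pi.single i 1)) - b * (D k - D (k - Pi.single i 1)) := by
      rw [hg k hk, hg k' hk', hxek, hxek']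
      rw [Real.log_mul (by positivity) (ne_of_gt hxk'),
          Real.log_mul (ne_of_gt hkip') (ne_of_gt hTk),
          Real.log_mul (by positivity) (ne_of_gt hTk'),
          Real.log_mul (ne_of_gt hkip) (ne_of_gt hxk),
          Real.log_mul (ne_of_gt hkip') (ne_of_gt hxk')]
      ring
    rw [xiDef, ← hb, hlog, hxek, hw, ← hX]
    field_simp
  set G := ∑ k ∈ edgesF Kbar i,
    (D k - D (k - Pi.single i 1)) * xeDef a x (k - Pi.single i 1) with hG
  have inner : ∀ k ∈ edgesF Kbar i,
      ∑ k' ∈ edgesF Kbar i,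
        ((D k' - D (k' - Pi.single i 1)) - (D k - D (k - Pi.single i 1))) *
          (w k i * xeDef a x (k' - Pi.single i 1) / X)
      = w k i * G / X - (D k - D (k - Pi.single i 1)) * w k i := by
    intro k hk
    have step : ∀ k' ∈ edgesF Kbar i,
        ((D k' - D (k' - Pi.single i 1)) - (D k - D (k - Pi.single i 1))) *
          (w k i * xeDef a x (k' - Pi.single i 1) / X)
        = (w k i / X) * ((D k' - D (k' - Pi.single i 1)) * xeDef a x (k' - Pi.single i 1))
          - ((D k - D (k - Pi.single i 1)) * w k i / X) * xeDef a x (k' - Pi.single i 1) := by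
      intro k' _; ring
    rw [Finset.sum_congr rfl step, Finset.sum_sub_distrib, ← Finset.mul_sum, ← Finset.mul_sum,
      ← hG, hsumT, div_mul_cancel₀ _ hXne]
    ring
  calc (∑ k ∈ edgesF Kbar i, ∑ k' ∈ edgesF Kbar i, xiDef Kbar μ a x k k' i)
      = ∑ k ∈ edgesF Kbar i,
          (w k i * G / X - (D k - D (k - Pi.single i 1)) * w k i) := by
        refine Finset.sum_congr rfl fun k hk => ?_
        rw [Finset.sum_congr rfl (fun k' hk' => hxi k hk k' hk')]
        exact inner k hk
    _ = (∑ k ∈ edgesF Kbar i, w k i) * G / X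
        - ∑ k ∈ edgesF Kbar i, (D k - D (k - Pi.single i 1)) * w k i := by
        rw [Finset.sum_sub_distrib, ← Finset.sum_div, ← Finset.sum_mul]
    _ = ∑ k ∈ edgesF Kbar i, (D k - D (k - Pi.single i 1)) * (v k i - w k i) := by
        rw [hsumw]
        have step : ∀ k ∈ edgesF Kbar i,
            (D k - D (k - Pi.single i 1)) * (v k i - w k i)
            = (lam i / X) * ((D k - D (k - Pi.single i 1)) * xeDef a x (k - Pi.single i 1))
              - (D k - D (k - Pi.single i 1)) * w k i := by
          intro k hk
          rw [hv k i, ← hX]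
          ring
        rw [Finset.sum_congr rfl step, Finset.sum_sub_distrib, ← Finset.mul_sum, ← hG]
        ring
end
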